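/- The formal power series (1+8z)^{-1/4} has integer coefficients, i.e., the sequence a_n = (2^n/n!)·∏_{k=0}^{n-1}(4k+1) (up to sign for the substitution z → -z) consists of integers: for all n ≥ 0, (2^n/n!)·∏_{k=0}^{n-1}(4k+1) ∈ ℤ. -/

import Mathlib

open Finset

/-- `q n = (∏_{k<n} (4k+1)) / n!`, the coefficients of `(1-4z)^{-1/4}`. -/
noncomputable def qq (n : ℕ) : ℚ :=
  (∏ k ∈ Finset.range n, ((4 : ℚ) * k + 1)) / Nat.factorial n

lemma qq_zero : qq 0 = 1 := by simp [qq]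

lemma fact_cast_ne (n : ℕ) : ((Nat.factorial n : ℚ)) ≠ 0 := by
  exact_mod_cast (Nat.factorial_ne_zero n)

lemma qq_succ (n : ℕ) : ((n : ℚ) + 1) * qq (n + 1) = (4 * n + 1) * qq n := by
  unfold qq
  rw [Finset.prod_range_succ, Nat.factorial_succ]
  have h1 : ((Nat.factorial n : ℚ)) ≠ 0 := fact_cast_ne n
  have h2 : ((n : ℚ) + 1) ≠ 0 := by positivity
  field_simp
  push_cast
  ring

/-- Convolution identity: `(1-4z)^{-1/4} * (1-4z)^{-1/4} = (1-4z)^{-1/2}`. -/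
lemma qq_conv (n : ℕ) :
    ∑ i ∈ Finset.range (n + 1), qq i * qq (n - i) = (Nat.choose (2 * n) n : ℚ) := by
  induction n with
  | zero => simp [qq_zero]
  | succ n ih =>
    set S : ℚ := ∑ i ∈ Finset.range (n + 2), qq i * qq (n + 1 - i) with hS
    set T : ℚ := ∑ i ∈ Finset.range (n + 2), (i : ℚ) * (qq i * qq (n + 1 - i)) with hT
    have reflT : ∑ i ∈ Finset.range (n + 2),
        ((n + 1 - i : ℕ) : ℚ) * (qq i * qq (n + 1 - i)) = T := by
      rw [hT]
      rw [← Finset.sum_range_reflect (fun i => (i : ℚ) * (qq i * qq (n + 1 - i))) (n + 2)]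
      apply Finset.sum_congr rfl
      intro i hi
      have hi' : i ≤ n + 1 := by
        simpa [Nat.lt_succ_iff] using hi
      have : n + 2 - 1 - i = n + 1 - i := by omega
      rw [this, Nat.sub_sub_self hi']
      ring
    have key1 : ((n : ℚ) + 1) * S = 2 * T := by
      rw [hS, Finset.mul_sum]
      rw [show (2 : ℚ) * T = T + T by ring]
      nth_rewrite 2 [← reflT]
      rw [hT, ← Finset.sum_add_distrib]
      apply Finset.sum_congr rfl
      intro i hi
      have hi' : i ≤ n + 1 := by simpa [Nat.lt_succ_iff] using hi
      have hcast : ((n + 1 - i : ℕ) : ℚ) = (n : ℚ) + 1 - i := by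
        push_cast [Nat.cast_sub hi']
        ring
      rw [hcast]
      ring
    set U : ℚ := ∑ j ∈ Finset.range (n + 1), (4 * (j : ℚ) + 1) * (qq j * qq (n - j)) with hU
    have key2 : T = U := by
      rw [hT, Finset.sum_range_succ']
      simp only [Nat.cast_zero, zero_mul, add_zero]
      rw [hU]
      apply Finset.sum_congr rfl
      intro j hj
      have hstep : ((j : ℚ) + 1) * qq (j + 1) = (4 * j + 1) * qq j := qq_succ j
      have hsub : n + 1 - (j + 1) = n - j := by omega
      rw [hsub]
      push_cast
      calc ((j : ℚ) + 1) * (qq (j + 1) * qq (n - j))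
          = (((j : ℚ) + 1) * qq (j + 1)) * qq (n - j) := by ring
        _ = ((4 * j + 1) * qq j) * qq (n - j) := by rw [hstep]
        _ = (4 * (j : ℚ) + 1) * (qq j * qq (n - j)) := by ring
    have reflU : ∑ j ∈ Finset.range (n + 1),
        (4 * ((n - j : ℕ) : ℚ) + 1) * (qq j * qq (n - j)) = U := by
      rw [hU]
      rw [← Finset.sum_range_reflect (fun j => (4 * (j : ℚ) + 1) * (qq j * qq (n - j))) (n + 1)]
      apply Finset.sum_congr rfl
      intro j hj
      have hj' : j ≤ n := by simpa [Nat.lt_succ_iff] using hj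
      have : n + 1 - 1 - j = n - j := by omega
      rw [this, Nat.sub_sub_self hj']
      ring
    have key3 : 2 * U = (4 * (n : ℚ) + 2) * ∑ i ∈ Finset.range (n + 1), qq i * qq (n - i) := by
      rw [show (2 : ℚ) * U = U + U by ring]
      nth_rewrite 1 [← reflU]
      rw [hU, ← Finset.sum_add_distrib, Finset.mul_sum]
      apply Finset.sum_congr rfl
      intro j hj
      have hj' : j ≤ n := by simpa [Nat.lt_succ_iff] using hj
      have hcast : ((n - j : ℕ) : ℚ) = (n : ℚ) - j := by
        push_cast [Nat.cast_sub hj']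
        ring
      rw [hcast]
      ring
    -- combine: (n+1) * S = (4n+2) * C(2n, n)
    have hcomb : ((n : ℚ) + 1) * S = (4 * (n : ℚ) + 2) * (Nat.choose (2 * n) n : ℚ) := by
      rw [key1, key2, key3, ih]
    -- central binomial recurrence
    have hcb : (n + 1) * Nat.centralBinom (n + 1) = 2 * (2 * n + 1) * Nat.centralBinom n :=
      Nat.succ_mul_centralBinom_succ n
    have hcbq : ((n : ℚ) + 1) * (Nat.choose (2 * (n + 1)) (n + 1) : ℚ)
        = (4 * (n : ℚ) + 2) * (Nat.choose (2 * n) n : ℚ) := by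
      simp only [Nat.centralBinom] at hcb
      have h' : (((n + 1) * Nat.choose (2 * (n + 1)) (n + 1) : ℕ) : ℚ)
          = ((2 * (2 * n + 1) * Nat.choose (2 * n) n : ℕ) : ℚ) := by exact_mod_cast hcb
      push_cast at h'
      linarith [h']
    have hne : ((n : ℚ) + 1) ≠ 0 := by positivity
    have := hcomb.trans hcbq.symm
    exact mul_left_cancel₀ hne this

/-- Sums of rationals of the form `c * integer` are of that form. -/
lemma sum_c_mul_int (c : ℚ) (s : Finset ℕ) (f : ℕ → ℚ)
    (h : ∀ i ∈ s, ∃ w : ℤ, f i = c * w) : ∃ W : ℤ, ∑ i ∈ s, f i = c * W := by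
  classical
  induction s using Finset.induction with
  | empty => exact ⟨0, by simp⟩
  | @insert a s' hx ih =>
    obtain ⟨w, hw⟩ := h a (Finset.mem_insert_self a s')
    obtain ⟨W, hW⟩ := ih (fun i hi => h i (Finset.mem_insert_of_mem hi))
    refine ⟨w + W, ?_⟩
    rw [Finset.sum_insert hx, hw, hW]
    push_cast
    ring

lemma key_induction (n : ℕ) : ∃ z : ℤ, (2 : ℚ) ^ n * qq n = z ∧ (n ≠ 0 → 2 ∣ z) := by
  induction n using Nat.strong_induction_on with
  | _ n ih =>
    match n with
    | 0 => exact ⟨1, by simp [qq_zero], by simp⟩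
    | 1 =>
      refine ⟨2, ?_, fun _ => dvd_refl 2⟩
      have : qq 1 = 1 := by simp [qq, Nat.factorial]
      rw [this]; norm_num
    | (m + 2) =>
      set N := m + 2 with hN
      have hconv := qq_conv N
      -- split off the i = 0 and i = N terms
      have hsplit : ∑ i ∈ Finset.range (N + 1), qq i * qq (N - i)
          = qq 0 * qq N + (∑ i ∈ Finset.Ico 1 N, qq i * qq (N - i)) + qq N * qq 0 := by
        rw [Finset.sum_range_succ, Nat.sub_self]
        have : Finset.range N = insert 0 (Finset.Ico 1 N) := by
          ext x
          simp only [Finset.mem_insert, Finset.mem_range, Finset.mem_Ico]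
          omega
        rw [this, Finset.sum_insert (by simp)]
        simp only [Nat.sub_zero]
      -- middle sum multiplied by 2^N is 4 * integer
      have hmid : ∃ W : ℤ, (2 : ℚ) ^ N * ∑ i ∈ Finset.Ico 1 N, qq i * qq (N - i) = 4 * W := by
        rw [Finset.mul_sum]
        apply sum_c_mul_int
        intro i hi
        rw [Finset.mem_Ico] at hi
        obtain ⟨hi1, hi2⟩ := hi
        obtain ⟨z1, hz1, hz1d⟩ := ih i hi2
        obtain ⟨z2, hz2, hz2d⟩ := ih (N - i) (by omega)
        obtain ⟨w1, hw1⟩ := hz1d (by omega)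
        obtain ⟨w2, hw2⟩ := hz2d (by omega)
        refine ⟨w1 * w2, ?_⟩
        have hpow : (2 : ℚ) ^ N = (2 : ℚ) ^ i * (2 : ℚ) ^ (N - i) := by
          rw [← pow_add]
          congr 1
          omega
        rw [hpow]
        calc (2 : ℚ) ^ i * (2 : ℚ) ^ (N - i) * (qq i * qq (N - i))
            = ((2 : ℚ) ^ i * qq i) * ((2 : ℚ) ^ (N - i) * qq (N - i)) := by ring
          _ = (z1 : ℚ) * (z2 : ℚ) := by rw [hz1, hz2]
          _ = 4 * ((w1 * w2 : ℤ) : ℚ) := by rw [hw1, hw2]; push_cast; ring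
      obtain ⟨W, hW⟩ := hmid
      -- from the convolution: 2 * (2^N * qq N) = 2^N * C - 4W
      have heq : 2 * ((2 : ℚ) ^ N * qq N)
          = (2 : ℚ) ^ N * (Nat.choose (2 * N) N : ℚ) - 4 * W := by
        have h0 : qq 0 = 1 := qq_zero
        rw [hsplit] at hconv
        have : (2 : ℚ) ^ N * (qq 0 * qq N + (∑ i ∈ Finset.Ico 1 N, qq i * qq (N - i)) + qq N * qq 0)
            = (2 : ℚ) ^ N * (Nat.choose (2 * N) N : ℚ) := by rw [hconv]
        rw [h0, mul_add, mul_add, hW] at this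
        linarith [this]
      refine ⟨2 * (2 ^ m * (Nat.choose (2 * N) N : ℤ) - W), ?_, fun _ => ⟨_, rfl⟩⟩
      rw [hN] at heq ⊢
      push_cast
      linear_combination heq / 2

/-- The coefficients of `(1 ± 8z)^(-1/4)` are integers: for all `n ≥ 0`,
`(2^n / n!) * ∏_{k=0}^{n-1} (4k+1)` is an integer. -/
theorem coeffs_of_one_add_eight_z_pow_neg_quarter_isInt (n : ℕ) :
    ∃ z : ℤ, ((2 : ℚ) ^ n / Nat.factorial n) * ∏ k ∈ Finset.range n, ((4 : ℚ) * k + 1) = z := by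
  obtain ⟨z, hz, -⟩ := key_induction n
  refine ⟨z, ?_⟩
  rw [← hz, qq]
  ring
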